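/- Let ℋ and 𝒢_1,…,𝒢_m be real Hilbert spaces, let α > 0, let U be a bounded self-adjoint operator on ℋ with U ⪰ αId, for every i ∈ {1,…,m} let U_i be a bounded self-adjoint operator on 𝒢_i with U_i ⪰ αId, and let L_i : ℋ → 𝒢_i be bounded linear operators. Suppose that Σ_{i=1}^m ‖U_i^{1/2} L_i U^{1/2}‖² < 1. Then the bounded linear operator W on 𝒦 = ℋ ⊕ 𝒢_1 ⊕ ⋯ ⊕ 𝒢_m defined by W(x, v_1,…,v_m) = ( U^{-1}x − Σ_{i=1}^m L_i^* v_i, −L_1 x + U_1^{-1}v_1, …, −L_m x + U_m^{-1}v_m ) is self-adjoint, and there exists ρ > 0 such that W ⪰ ρ Id, i.e. ⟨W(x,v_1,…,v_m), (x,v_1,…,v_m)⟩ ≥ ρ( ‖x‖² + Σ_{i=1}^m ‖v_i‖² ) for all (x,v_1,…,v_m) ∈ 𝒦. -/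

import Mathlib

open scoped RealInnerProductSpace

set_option maxHeartbeats 1600000 in
/-- With `U ⪰ αId` on `ℋ`, `Uᵢ ⪰ αId` on `𝒢ᵢ` (square roots `RU`, `RUi`,
inverses `Uinv`, `Uiinv`) and `Σᵢ ‖Uᵢ^{1/2} Lᵢ U^{1/2}‖² < 1`, the operator
`W(x,v) = (U⁻¹x − Σᵢ Lᵢ* vᵢ, (−Lᵢ x + Uᵢ⁻¹ vᵢ)ᵢ)` on `𝒦 = ℋ ⊕ 𝒢₁ ⊕ ⋯ ⊕ 𝒢ₘ` is self-adjoint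
and `⪰ ρ Id` for some `ρ > 0`. -/
theorem statement8
    {H : Type*} [NormedAddCommGroup H] [InnerProductSpace ℝ H] [CompleteSpace H]
    {m : ℕ} (hm : 0 < m)
    {G : Fin m → Type*} [∀ i, NormedAddCommGroup (G i)] [∀ i, InnerProductSpace ℝ (G i)]
    [∀ i, CompleteSpace (G i)]
    (α : ℝ) (hα : 0 < α)
    (U : H →L[ℝ] H)
    (hUsa : ∀ x y : H, ⟪U x, y⟫ = ⟪x, U y⟫)
    (hUα : ∀ x : H, α * ‖x‖ ^ 2 ≤ ⟪U x, x⟫)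
    (Ui : ∀ i, G i →L[ℝ] G i)
    (hUisa : ∀ i, ∀ x y : G i, ⟪Ui i x, y⟫ = ⟪x, Ui i y⟫)
    (hUiα : ∀ i, ∀ x : G i, α * ‖x‖ ^ 2 ≤ ⟪Ui i x, x⟫)
    (L : ∀ i, H →L[ℝ] G i)
    -- inverses
    (Uinv : H →L[ℝ] H)
    (hUinv1 : U.comp Uinv = ContinuousLinearMap.id ℝ H)
    (hUinv2 : Uinv.comp U = ContinuousLinearMap.id ℝ H)
    (Uiinv : ∀ i, G i →L[ℝ] G i)
    (hUiinv1 : ∀ i, (Ui i).comp (Uiinv i) = ContinuousLinearMap.id ℝ (G i))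
    (hUiinv2 : ∀ i, (Uiinv i).comp (Ui i) = ContinuousLinearMap.id ℝ (G i))
    -- square roots
    (RU : H →L[ℝ] H)
    (hRUsa : ∀ x y : H, ⟪RU x, y⟫ = ⟪x, RU y⟫)
    (hRUpos : ∀ x : H, 0 ≤ ⟪RU x, x⟫)
    (hRUsq : RU.comp RU = U)
    (RUi : ∀ i, G i →L[ℝ] G i)
    (hRUisa : ∀ i, ∀ x y : G i, ⟪RUi i x, y⟫ = ⟪x, RUi i y⟫)
    (hRUipos : ∀ i, ∀ x : G i, 0 ≤ ⟪RUi i x, x⟫)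
    (hRUisq : ∀ i, (RUi i).comp (RUi i) = Ui i)
    -- Σᵢ ‖Uᵢ^{1/2} Lᵢ U^{1/2}‖² < 1
    (hsum : ∑ i, ‖(RUi i).comp ((L i).comp RU)‖ ^ 2 < 1)
    -- the operator W
    (W : (H × ∀ i, G i) → (H × ∀ i, G i))
    (hW : ∀ p : H × ∀ i, G i,
      W p = (Uinv p.1 - ∑ i, ContinuousLinearMap.adjoint (L i) (p.2 i),
             fun i => -(L i p.1) + Uiinv i (p.2 i))) :
    -- W is self-adjoint for the direct-sum scalar product …
    ((∀ p q : H × ∀ i, G i,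
        ⟪(W p).1, q.1⟫ + ∑ i, ⟪(W p).2 i, q.2 i⟫
          = ⟪p.1, (W q).1⟫ + ∑ i, ⟪p.2 i, (W q).2 i⟫)) ∧
    -- … and W ⪰ ρ Id for some ρ > 0
    (∃ ρ : ℝ, 0 < ρ ∧ ∀ p : H × ∀ i, G i,
      ρ * (‖p.1‖ ^ 2 + ∑ i, ‖p.2 i‖ ^ 2) ≤ ⟪(W p).1, p.1⟫ + ∑ i, ⟪(W p).2 i, p.2 i⟫) := by

  -- applications of the inverse identities
  have hU1 : ∀ x : H, U (Uinv x) = x := fun x => ContinuousLinearMap.ext_iff.mp hUinv1 x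
  have hUi1 : ∀ i, ∀ x : G i, Ui i (Uiinv i x) = x := fun i x =>
    ContinuousLinearMap.ext_iff.mp (hUiinv1 i) x
  have hRU2 : ∀ x : H, RU (RU x) = U x := fun x => (ContinuousLinearMap.ext_iff.mp hRUsq x).symm ▸
    rfl
  have hRU2' : ∀ x : H, RU (RU x) = U x := fun x => ContinuousLinearMap.ext_iff.mp hRUsq x
  have hRUi2 : ∀ i, ∀ x : G i, RUi i (RUi i x) = Ui i x := fun i x =>
    ContinuousLinearMap.ext_iff.mp (hRUisq i) x
  -- self-adjointness of the inverses
  have hUinvsa : ∀ x y : H, ⟪Uinv x, y⟫ = ⟪x, Uinv y⟫ := by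
    intro x y
    calc ⟪Uinv x, y⟫ = ⟪Uinv x, U (Uinv y)⟫ := by rw [hU1]
      _ = ⟪U (Uinv x), Uinv y⟫ := (hUsa _ _).symm
      _ = ⟪x, Uinv y⟫ := by rw [hU1]
  have hUiinvsa : ∀ i, ∀ x y : G i, ⟪Uiinv i x, y⟫ = ⟪x, Uiinv i y⟫ := by
    intro i x y
    calc ⟪Uiinv i x, y⟫ = ⟪Uiinv i x, Ui i (Uiinv i y)⟫ := by rw [hUi1]
      _ = ⟪Ui i (Uiinv i x), Uiinv i y⟫ := (hUisa i _ _).symm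
      _ = ⟪x, Uiinv i y⟫ := by rw [hUi1]
  constructor
  · -- self-adjointness of W
    rintro ⟨x, v⟩ ⟨y, w⟩
    simp only [hW]
    simp only [inner_sub_left, inner_sub_right, sum_inner, inner_sum,
      ContinuousLinearMap.adjoint_inner_left, ContinuousLinearMap.adjoint_inner_right,
      inner_add_left, inner_add_right, inner_neg_left, inner_neg_right,
      Finset.sum_add_distrib, Finset.sum_neg_distrib]
    have hD : ∑ i, ⟪Uiinv i (v i), w i⟫ = ∑ i, ⟪v i, Uiinv i (w i)⟫ :=
      Finset.sum_congr rfl fun i _ => hUiinvsa i _ _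
    have h1 : ⟪Uinv x, y⟫ = ⟪x, Uinv y⟫ := hUinvsa x y
    have hE : ∑ i, ⟪v i, L i y⟫ = ∑ i, ⟪L i y, v i⟫ :=
      Finset.sum_congr rfl fun i _ => real_inner_comm _ _
    have hF : ∑ i, ⟪L i x, w i⟫ = ∑ i, ⟪w i, L i x⟫ :=
      Finset.sum_congr rfl fun i _ => real_inner_comm _ _
    linarith [hD, h1, hE, hF]
  · -- strong monotonicity
    set S : ℝ := ∑ i, ‖(RUi i).comp ((L i).comp RU)‖ ^ 2 with hSdef
    have hS0 : 0 ≤ S := Finset.sum_nonneg fun i _ => sq_nonneg _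
    have hS1 : S < 1 := hsum
    set c : ℝ := 2 / (1 + S) with hcdef
    have h1S : (0 : ℝ) < 1 + S := by linarith
    have hc0 : 0 < c := by positivity
    have hc : c * (1 + S) = 2 := by rw [hcdef, div_mul_cancel₀ _ h1S.ne']
    set C : ℝ := 1 + ‖RU‖ ^ 2 + ∑ i, ‖RUi i‖ ^ 2 with hCdef
    have hsumRUi : (0 : ℝ) ≤ ∑ i, ‖RUi i‖ ^ 2 := Finset.sum_nonneg fun i _ => sq_nonneg _
    have hC1 : (1 : ℝ) ≤ C := by
      have := sq_nonneg ‖RU‖; simp only [hCdef]; linarith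
    have hC0 : (0 : ℝ) < C := by linarith
    have hCeq : ‖RU‖ ^ 2 ≤ C ∧ ∀ i, ‖RUi i‖ ^ 2 ≤ C := by
      constructor
      · simp only [hCdef]; linarith
      · intro i
        have h5 : ‖RUi i‖ ^ 2 ≤ ∑ j, ‖RUi j‖ ^ 2 :=
          Finset.single_le_sum (fun j _ => sq_nonneg ‖RUi j‖) (Finset.mem_univ i)
        simp only [hCdef]
        linarith [sq_nonneg ‖RU‖, h5]
    clear_value S c C
    refine ⟨(1 - S) / (2 * C), div_pos (by linarith) (by linarith), ?_⟩
    rintro ⟨x, v⟩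
    set a : H := RU (Uinv x) with hadef
    set b : ∀ i, G i := fun i => RUi i (Uiinv i (v i)) with hbdef
    have hax : RU a = x := by rw [hadef, hRU2', hU1]
    have hbv : ∀ i, RUi i (b i) = v i := fun i => by rw [hbdef]; rw [hRUi2, hUi1]
    have hna : ⟪Uinv x, x⟫ = ‖a‖ ^ 2 := by
      have : ‖a‖ ^ 2 = ⟪a, a⟫ := (real_inner_self_eq_norm_sq a).symm
      rw [this, hadef, hRUsa, hRU2', hU1, real_inner_comm]
    have hnb : ∀ i, ⟪Uiinv i (v i), v i⟫ = ‖b i‖ ^ 2 := by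
      intro i
      have : ‖b i‖ ^ 2 = ⟪b i, b i⟫ := (real_inner_self_eq_norm_sq (b i)).symm
      rw [this, hbdef]
      simp only
      rw [hRUisa, hRUi2, hUi1, real_inner_comm]
    clear_value a b
    -- the value of ⟪W p, p⟫
    have key : ⟪(W (x, v)).1, (x, v).1⟫ + ∑ i, ⟪(W (x, v)).2 i, (x, v).2 i⟫
        = ‖a‖ ^ 2 + (∑ i, ‖b i‖ ^ 2) - 2 * ∑ i, ⟪L i x, v i⟫ := by
      simp only [hW]
      simp only [inner_sub_left, sum_inner, ContinuousLinearMap.adjoint_inner_left,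
        inner_add_left, inner_neg_left, Finset.sum_add_distrib, Finset.sum_neg_distrib]
      have e1 : ∑ i, ⟪v i, L i x⟫ = ∑ i, ⟪L i x, v i⟫ :=
        Finset.sum_congr rfl fun i _ => real_inner_comm _ _
      have e2 : ∑ i, ⟪Uiinv i (v i), v i⟫ = ∑ i, ‖b i‖ ^ 2 :=
        Finset.sum_congr rfl fun i _ => hnb _
      rw [e1, e2, hna]
      ring
    -- the cross terms
    have hcross : ∀ i, ⟪L i x, v i⟫ = ⟪((RUi i).comp ((L i).comp RU)) a, b i⟫ := by
      intro i
      rw [← hbv i, ← hRUisa i, ← hax]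
      simp [ContinuousLinearMap.comp_apply, hax]
    have hbound : ∀ i, 2 * ⟪L i x, v i⟫ ≤
        c * (‖(RUi i).comp ((L i).comp RU)‖ ^ 2 * ‖a‖ ^ 2) + ((1 + S) / 2) * ‖b i‖ ^ 2 := by
      intro i
      set T := (RUi i).comp ((L i).comp RU) with hT
      have h1 : ⟪T a, b i⟫ ≤ ‖T a‖ * ‖b i‖ := real_inner_le_norm _ _
      have h2 : ‖T a‖ ≤ ‖T‖ * ‖a‖ := T.le_opNorm a
      have h3 : ⟪T a, b i⟫ ≤ (‖T‖ * ‖a‖) * ‖b i‖ := by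
        refine h1.trans ?_
        exact mul_le_mul_of_nonneg_right h2 (norm_nonneg _)
      rw [hcross i]
      have hq := sq_nonneg (c * (‖T‖ * ‖a‖) - ‖b i‖)
      nlinarith [hq, hc, hc0, sq_nonneg (‖b i‖), mul_pos hc0 h1S]
    have hsum2 : 2 * ∑ i, ⟪L i x, v i⟫ ≤
        c * S * ‖a‖ ^ 2 + ((1 + S) / 2) * ∑ i, ‖b i‖ ^ 2 := by
      rw [Finset.mul_sum]
      calc ∑ i, 2 * ⟪L i x, v i⟫
          ≤ ∑ i, (c * (‖(RUi i).comp ((L i).comp RU)‖ ^ 2 * ‖a‖ ^ 2)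
              + ((1 + S) / 2) * ‖b i‖ ^ 2) := Finset.sum_le_sum fun i _ => hbound i
        _ = c * S * ‖a‖ ^ 2 + ((1 + S) / 2) * ∑ i, ‖b i‖ ^ 2 := by
            rw [Finset.sum_add_distrib, ← Finset.mul_sum, ← Finset.mul_sum,
              ← Finset.sum_mul, ← hSdef]
            ring
    -- norm comparisons
    have hXA : ‖x‖ ^ 2 ≤ C * ‖a‖ ^ 2 := by
      have h2 : ‖x‖ ≤ ‖RU‖ * ‖a‖ := by rw [← hax]; exact RU.le_opNorm a
      have h4 : ‖x‖ ^ 2 ≤ (‖RU‖ * ‖a‖) ^ 2 := pow_le_pow_left₀ (norm_nonneg x) h2 2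
      nlinarith [hCeq.1, sq_nonneg ‖a‖, h4]
    have hVB : ∀ i, ‖v i‖ ^ 2 ≤ C * ‖b i‖ ^ 2 := by
      intro i
      have h2 : ‖v i‖ ≤ ‖RUi i‖ * ‖b i‖ := by rw [← hbv i]; exact (RUi i).le_opNorm (b i)
      have h4 : ‖v i‖ ^ 2 ≤ (‖RUi i‖ * ‖b i‖) ^ 2 := pow_le_pow_left₀ (norm_nonneg _) h2 2
      nlinarith [hCeq.2 i, sq_nonneg ‖b i‖, h4]
    have hVsum : ∑ i, ‖v i‖ ^ 2 ≤ C * ∑ i, ‖b i‖ ^ 2 := by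
      rw [Finset.mul_sum]
      exact Finset.sum_le_sum fun i _ => hVB i
    have hA0 : (0 : ℝ) ≤ ‖a‖ ^ 2 := sq_nonneg _
    have hB0 : (0 : ℝ) ≤ ∑ i, ‖b i‖ ^ 2 := Finset.sum_nonneg fun i _ => sq_nonneg _
    rw [key]
    -- final arithmetic
    have hcS : 1 - c * S ≥ (1 - S) / 2 := by
      rw [ge_iff_le, div_le_iff₀ (by norm_num : (0:ℝ) < 2)]
      nlinarith [hc, sq_nonneg (1 - S), h1S]
    have hstep : ((1 - S) / 2) * (‖a‖ ^ 2 + ∑ i, ‖b i‖ ^ 2)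
        ≤ ‖a‖ ^ 2 + (∑ i, ‖b i‖ ^ 2) - 2 * ∑ i, ⟪L i x, v i⟫ := by
      nlinarith [hsum2, hcS, hA0, hB0]
    have hfin : ((1 - S) / (2 * C)) * (‖x‖ ^ 2 + ∑ i, ‖v i‖ ^ 2)
        ≤ ((1 - S) / 2) * (‖a‖ ^ 2 + ∑ i, ‖b i‖ ^ 2) := by
      have hle : ‖x‖ ^ 2 + ∑ i, ‖v i‖ ^ 2 ≤ C * (‖a‖ ^ 2 + ∑ i, ‖b i‖ ^ 2) := by
        nlinarith [hXA, hVsum]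
      have hρ0 : (0 : ℝ) ≤ (1 - S) / (2 * C) := div_nonneg (by linarith) (by linarith)
      calc ((1 - S) / (2 * C)) * (‖x‖ ^ 2 + ∑ i, ‖v i‖ ^ 2)
          ≤ ((1 - S) / (2 * C)) * (C * (‖a‖ ^ 2 + ∑ i, ‖b i‖ ^ 2)) :=
            mul_le_mul_of_nonneg_left hle hρ0
        _ = ((1 - S) / 2) * (‖a‖ ^ 2 + ∑ i, ‖b i‖ ^ 2) := by
            field_simp
    exact hfin.trans hstep
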